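/- arXiv:2502.05154 — 5 statements merged into one kernel-verified Lean document; each statement's English description precedes it below -/
import Mathlib

section
/- Let H be a complex Hilbert space and A, B bounded self-adjoint operators on H. For every unit vector h, Δ_h(A)·Δ_h(B) ≥ (1/2)|⟨[A,B]h, h⟩|, where Δ_h(A) := ‖Ah − ⟨Ah,h⟩h‖ and [A,B] := AB − BA (Heisenberg–Robertson uncertainty principle). -/
open scoped InnerProductSpace

open ComplexConjugate in
/-- Heisenberg–Robertson uncertainty principle. -/
theorem heisenberg_robertson {H : Type*} [NormedAddCommGroup H] [InnerProductSpace ℂ H]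
    [CompleteSpace H] (A B : H →L[ℂ] H) (hA : IsSelfAdjoint A) (hB : IsSelfAdjoint B)
    (h : H) (hh : ‖h‖ = 1) :
    (1 / 2 : ℝ) * ‖⟪(A ∘L B - B ∘L A) h, h⟫_ℂ‖ ≤
      ‖A h - ⟪A h, h⟫_ℂ • h‖ * ‖B h - ⟪B h, h⟫_ℂ • h‖ := by
  have hAs := hA.isSymmetric
  have hBs := hB.isSymmetric
  set α : ℂ := ⟪A h, h⟫_ℂ with hα
  set β : ℂ := ⟪B h, h⟫_ℂ with hβ
  set a : H := A h - α • h with ha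
  set b : H := B h - β • h with hb
  have hhh : ⟪h, h⟫_ℂ = 1 := by
    rw [inner_self_eq_norm_sq_to_K, hh]; norm_num
  have hαr : conj α = α := by
    rw [hα, inner_conj_symm]; exact (hAs h h).symm
  have hβr : conj β = β := by
    rw [hβ, inner_conj_symm]; exact (hBs h h).symm
  have key : ⟪(A ∘L B - B ∘L A) h, h⟫_ℂ = ⟪b, a⟫_ℂ - ⟪a, b⟫_ℂ := by
    have h1 : ⟪A (B h), h⟫_ℂ = ⟪B h, A h⟫_ℂ := hAs (B h) h
    have h2 : ⟪B (A h), h⟫_ℂ = ⟪A h, B h⟫_ℂ := hBs (A h) h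
    simp only [ha, hb, ContinuousLinearMap.sub_apply, ContinuousLinearMap.comp_apply,
      inner_sub_left, inner_sub_right, inner_smul_left, inner_smul_right, h1, h2, hhh,
      ← hα, ← hβ, ← inner_conj_symm h (A h), ← inner_conj_symm h (B h), hαr, hβr]
    ring
  have hconj : ⟪a, b⟫_ℂ = conj ⟪b, a⟫_ℂ := (inner_conj_symm a b).symm
  set z : ℂ := ⟪b, a⟫_ℂ with hz
  have h3 : ‖⟪(A ∘L B - B ∘L A) h, h⟫_ℂ‖ ≤ 2 * ‖z‖ := by
    rw [key, hconj]
    have : z - conj z = (2 * z.im : ℝ) * Complex.I := Complex.sub_conj z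
    rw [this]
    simp only [norm_mul, Complex.norm_real, Complex.norm_I, mul_one, Complex.norm_real]
    rw [Real.norm_eq_abs, abs_two]
    have h5 := Complex.abs_im_le_norm z
    rw [Real.norm_eq_abs]; nlinarith
  have h4 : ‖z‖ ≤ ‖b‖ * ‖a‖ := norm_inner_le_norm b a
  calc (1 / 2 : ℝ) * ‖⟪(A ∘L B - B ∘L A) h, h⟫_ℂ‖
      ≤ (1 / 2 : ℝ) * (2 * ‖z‖) := by linarith
    _ = ‖z‖ := by ring
    _ ≤ ‖b‖ * ‖a‖ := h4
    _ = ‖a‖ * ‖b‖ := mul_comm _ _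
end

section
/- Let E be a Hilbert C*-module over a unital C*-algebra A, and let T, S be bounded adjointable self-adjoint operators on E. For x ∈ E with ⟨x,x⟩ = 1, Δ_x(T)·Δ_x(S) ≥ ‖⟨Tx,Sx⟩ − ⟨Tx,x⟩⟨Sx,x⟩‖, where Δ_x(T) := ‖Tx − ⟨Tx,x⟩x‖. -/
open scoped RightActions

/-- The Hilbert C⋆-module class as it stood in Mathlib (Dec 2024): right `A`-action via `Aᵐᵒᵖ`,
inner product `A`-linear on the right in the second argument. -/
class CStarModuleRight (A : outParam <| Type*) (E : Type*) [NonUnitalSemiring A] [StarRing A]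
    [Module ℂ A] [AddCommGroup E] [Module ℂ E] [PartialOrder A] [SMul Aᵐᵒᵖ E] [Norm A] [Norm E]
    extends Inner A E where
  inner_add_right {x y z : E} : Inner.inner A x (y + z) = Inner.inner A x y + Inner.inner A x z
  inner_self_nonneg {x : E} : 0 ≤ Inner.inner A x x
  inner_self {x : E} : Inner.inner A x x = 0 ↔ x = 0
  inner_op_smul_right {a : A} {x y : E} : Inner.inner A x (y <• a) = Inner.inner A x y * a
  inner_smul_right_complex {z : ℂ} {x y : E} : Inner.inner A x (z • y) = z • Inner.inner A x y
  star_inner (x y : E) : star (Inner.inner A x y) = Inner.inner A y x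
  norm_eq_sqrt_norm_inner_self (x : E) : ‖x‖ = √‖Inner.inner A x x‖

variable {A E : Type*} [CStarAlgebra A] [PartialOrder A] [StarOrderedRing A]
  [AddCommGroup E] [Module ℂ E] [SMul Aᵐᵒᵖ E] [Norm E] [CStarModuleRight A E]

local notation "⟪" x ", " y "⟫" => (inner A x y : A)

namespace CStarModuleRight

lemma inner_add_left' {x y z : E} : ⟪x + y, z⟫ = ⟪x, z⟫ + ⟪y, z⟫ := by
  rw [← CStarModuleRight.star_inner z (x + y), CStarModuleRight.inner_add_right, star_add,
    CStarModuleRight.star_inner, CStarModuleRight.star_inner]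

lemma inner_sub_right {x y z : E} : ⟪x, y - z⟫ = ⟪x, y⟫ - ⟪x, z⟫ := by
  have h : y - z = y + (-1 : ℂ) • z := by rw [neg_one_smul, sub_eq_add_neg]
  rw [h, CStarModuleRight.inner_add_right, CStarModuleRight.inner_smul_right_complex,
    neg_one_smul, sub_eq_add_neg]

lemma inner_sub_left {x y z : E} : ⟪x - y, z⟫ = ⟪x, z⟫ - ⟪y, z⟫ := by
  rw [← CStarModuleRight.star_inner z (x - y), inner_sub_right, star_sub,
    CStarModuleRight.star_inner, CStarModuleRight.star_inner]

lemma inner_op_smul_left {a : A} {x y : E} : ⟪x <• a, y⟫ = star a * ⟪x, y⟫ := by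
  rw [← CStarModuleRight.star_inner y, CStarModuleRight.inner_op_smul_right, star_mul,
    CStarModuleRight.star_inner]

lemma inner_smul_left_real {r : ℝ} {x y : E} : ⟪(r : ℂ) • x, y⟫ = r • ⟪x, y⟫ := by
  rw [← CStarModuleRight.star_inner y, CStarModuleRight.inner_smul_right_complex, star_smul,
    CStarModuleRight.star_inner, Complex.star_def, Complex.conj_ofReal, Complex.coe_smul]

lemma inner_smul_right_real {r : ℝ} {x y : E} : ⟪x, (r : ℂ) • y⟫ = r • ⟪x, y⟫ := by
  rw [CStarModuleRight.inner_smul_right_complex, Complex.coe_smul]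

lemma norm_sq' {x : E} : ‖x‖ ^ 2 = ‖⟪x, x⟫‖ := by
  rw [CStarModuleRight.norm_eq_sqrt_norm_inner_self (A := A), Real.sq_sqrt (norm_nonneg _)]

lemma inner_swap_mul_inner_le {x y : E} : ⟪y, x⟫ * ⟪x, y⟫ ≤ ‖x‖ ^ 2 • ⟪y, y⟫ := by
  rcases eq_or_ne x 0 with h | h
  · have h0 : ⟪y, x⟫ = 0 := by
      have : x = (0 : ℂ) • x := by rw [zero_smul]; exact h
      rw [this, CStarModuleRight.inner_smul_right_complex, zero_smul]
    have h1 : ⟪x, y⟫ = 0 := by rw [← CStarModuleRight.star_inner y x, h0, star_zero]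
    have h2 : ‖x‖ = 0 := by
      rw [CStarModuleRight.norm_eq_sqrt_norm_inner_self (A := A), h,
        CStarModuleRight.inner_self.mpr rfl, norm_zero, Real.sqrt_zero]
    rw [h0, h1, h2, zero_mul]
    simp
  · set r : ℝ := ‖x‖ ^ 2 with hr
    have hr0 : 0 < r := by
      rw [hr, norm_sq']
      exact norm_pos_iff.mpr (fun H => h (CStarModuleRight.inner_self.mp H))
    have hv := CStarModuleRight.inner_self_nonneg (x := x <• ⟪x, y⟫ - (r : ℂ) • y)
    simp only [inner_sub_left, inner_sub_right, CStarModuleRight.inner_op_smul_right,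
      inner_op_smul_left, inner_smul_left_real, inner_smul_right_real,
      CStarModuleRight.star_inner] at hv
    have hle : ⟪y, x⟫ * ⟪x, x⟫ * ⟪x, y⟫ ≤ r • (⟪y, x⟫ * ⟪x, y⟫) := by
      have := CStarAlgebra.star_left_conjugate_le_norm_smul (a := ⟪x, y⟫) (b := ⟪x, x⟫)
        (CStarModuleRight.star_inner x x)
      rw [CStarModuleRight.star_inner] at this
      rw [hr, norm_sq']
      exact this
    have key : 0 ≤ r • (r • ⟪y, y⟫ - ⟪y, x⟫ * ⟪x, y⟫) := by
      have e : r • (r • ⟪y, y⟫ - ⟪y, x⟫ * ⟪x, y⟫)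
          = (⟪y, x⟫ * ⟪x, x⟫ * ⟪x, y⟫ - r • (⟪y, x⟫ * ⟪x, y⟫)
              - (r • (⟪y, x⟫ * ⟪x, y⟫) - r • r • ⟪y, y⟫))
            + (r • (⟪y, x⟫ * ⟪x, y⟫) - ⟪y, x⟫ * ⟪x, x⟫ * ⟪x, y⟫) := by
        rw [smul_sub]; abel
      rw [e]
      refine add_nonneg ?_ (sub_nonneg.mpr hle)
      convert hv using 1
      simp only [sub_mul, smul_mul_assoc, smul_sub, mul_assoc]
    have := smul_nonneg (inv_nonneg.mpr hr0.le) key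
    rw [smul_smul, inv_mul_cancel₀ hr0.ne', one_smul] at this
    exact sub_nonneg.mp this

variable (E) in
lemma norm_inner_le {x y : E} : ‖⟪x, y⟫‖ ≤ ‖x‖ * ‖y‖ := by
  have hn : ∀ z : E, 0 ≤ ‖z‖ := fun z => by
    rw [CStarModuleRight.norm_eq_sqrt_norm_inner_self (A := A) z]; exact Real.sqrt_nonneg _
  have h1 : ‖⟪x, y⟫‖ ^ 2 ≤ (‖x‖ * ‖y‖) ^ 2 := calc
    ‖⟪x, y⟫‖ ^ 2 = ‖⟪y, x⟫ * ⟪x, y⟫‖ := by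
        rw [← CStarModuleRight.star_inner x y, CStarRing.norm_star_mul_self, pow_two]
    _ ≤ ‖‖x‖ ^ 2 • ⟪y, y⟫‖ := CStarAlgebra.norm_le_norm_of_nonneg_of_le
        (by rw [← CStarModuleRight.star_inner x y]; exact star_mul_self_nonneg _)
        inner_swap_mul_inner_le
    _ = ‖x‖ ^ 2 * ‖⟪y, y⟫‖ := by rw [norm_smul, Real.norm_of_nonneg (by positivity)]
    _ = (‖x‖ * ‖y‖) ^ 2 := by rw [← norm_sq' (x := y), mul_pow]
  exact (pow_le_pow_iff_left₀ (norm_nonneg _) (mul_nonneg (hn x) (hn y)) two_ne_zero).mp h1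

end CStarModuleRight

/-- Theorem NH (v), first inequality. -/
theorem norm_uncertainty_ge_inner
(T S : E →ₗ[ℂ] E)
    (hTA : ∀ (a : A) (y : E), T (y <• a) = T y <• a)
    (hSA : ∀ (a : A) (y : E), S (y <• a) = S y <• a)
    (hT : ∀ y z : E, ⟪T y, z⟫ = ⟪y, T z⟫) (hS : ∀ y z : E, ⟪S y, z⟫ = ⟪y, S z⟫)
    (hTb : ∃ C : ℝ, ∀ y : E, ‖T y‖ ≤ C * ‖y‖) (hSb : ∃ C : ℝ, ∀ y : E, ‖S y‖ ≤ C * ‖y‖)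
    (x : E) (hx : ⟪x, x⟫ = 1) :
    ‖⟪T x, S x⟫ - ⟪T x, x⟫ * ⟪S x, x⟫‖ ≤
      ‖T x - x <• ⟪T x, x⟫‖ * ‖S x - x <• ⟪S x, x⟫‖ := by
  have ha : star (⟪T x, x⟫ : A) = ⟪T x, x⟫ := by
    rw [CStarModuleRight.star_inner, hT]
  have key : ⟪T x - x <• ⟪T x, x⟫, S x - x <• ⟪S x, x⟫⟫
      = ⟪T x, S x⟫ - ⟪T x, x⟫ * ⟪S x, x⟫ := by
    rw [CStarModuleRight.inner_sub_left, CStarModuleRight.inner_sub_right,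
      CStarModuleRight.inner_sub_right, CStarModuleRight.inner_op_smul_right,
      CStarModuleRight.inner_op_smul_left, CStarModuleRight.inner_op_smul_left,
      CStarModuleRight.inner_op_smul_right, ha, hx]
    have hb : (⟪x, S x⟫ : A) = ⟪S x, x⟫ := (hS x x).symm
    rw [hb]
    rw [one_mul, sub_self, sub_zero]
  calc ‖⟪T x, S x⟫ - ⟪T x, x⟫ * ⟪S x, x⟫‖
      = ‖⟪T x - x <• ⟪T x, x⟫, S x - x <• ⟪S x, x⟫⟫‖ := by rw [key]
    _ ≤ _ := CStarModuleRight.norm_inner_le E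
end

section
/- Let E be a Hilbert C*-module over a unital C*-algebra A, and let T, S be bounded adjointable self-adjoint operators on E. For x ∈ E with ⟨x,x⟩ = 1, Δ_x(T)·Δ_x(S) ≥ (1/2)‖⟨[T,S]x,x⟩ + [⟨Tx,x⟩,⟨Sx,x⟩]‖ (noncommutative Heisenberg–Robertson uncertainty principle). -/
open scoped RightActions

class OldRightCStarModule (A E : Type*) [NonUnitalSemiring A] [StarRing A]
    [Module ℂ A] [AddCommGroup E] [Module ℂ E] [PartialOrder A] [SMul Aᵐᵒᵖ E] [Norm A] [Norm E]
    extends Inner A E where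
  inner_add_right {x} {y} {z} : inner x (y + z) = inner x y + inner x z
  inner_self_nonneg {x} : 0 ≤ inner x x
  inner_self {x} : inner x x = 0 ↔ x = 0
  inner_op_smul_right {a : A} {x y : E} : inner x (y <• a) = inner x y * a
  inner_smul_right_complex {z : ℂ} {x} {y} : inner x (z • y) = z • inner x y
  star_inner x y : star (inner x y) = inner y x
  norm_eq_sqrt_norm_inner_self x : ‖x‖ = √‖inner x x‖

variable {A E : Type*} [CStarAlgebra A] [PartialOrder A] [StarOrderedRing A]
  [AddCommGroup E] [Module ℂ E] [SMul Aᵐᵒᵖ E] [Norm E] [OldRightCStarModule A E]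

local notation "⟪" x ", " y "⟫" => (inner A x y : A)

omit [StarOrderedRing A] in
lemma r_inner_add_left {x y z : E} : ⟪x + y, z⟫ = ⟪x, z⟫ + ⟪y, z⟫ := by
  rw [← OldRightCStarModule.star_inner, OldRightCStarModule.inner_add_right, star_add,
    OldRightCStarModule.star_inner, OldRightCStarModule.star_inner]

omit [StarOrderedRing A] in
lemma r_inner_neg_right {x y : E} : ⟪x, -y⟫ = -⟪x, y⟫ := by
  rw [show -y = (-1 : ℂ) • y by simp, OldRightCStarModule.inner_smul_right_complex, neg_one_smul]

omit [StarOrderedRing A] in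
lemma r_inner_sub_right {x y z : E} : ⟪x, y - z⟫ = ⟪x, y⟫ - ⟪x, z⟫ := by
  rw [sub_eq_add_neg, OldRightCStarModule.inner_add_right, r_inner_neg_right, ← sub_eq_add_neg]

omit [StarOrderedRing A] in
lemma r_inner_sub_left {x y z : E} : ⟪x - y, z⟫ = ⟪x, z⟫ - ⟪y, z⟫ := by
  rw [← OldRightCStarModule.star_inner, r_inner_sub_right, star_sub,
    OldRightCStarModule.star_inner, OldRightCStarModule.star_inner]

omit [StarOrderedRing A] in
lemma r_inner_op_smul_left {a : A} {x y : E} : ⟪x <• a, y⟫ = star a * ⟪x, y⟫ := by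
  rw [← OldRightCStarModule.star_inner, OldRightCStarModule.inner_op_smul_right, star_mul,
    OldRightCStarModule.star_inner]

omit [StarOrderedRing A] in
lemma r_inner_smul_left_real {c : ℝ} {x y : E} : ⟪(c : ℂ) • x, y⟫ = c • ⟪x, y⟫ := by
  rw [← OldRightCStarModule.star_inner, OldRightCStarModule.inner_smul_right_complex, star_smul,
    OldRightCStarModule.star_inner, Complex.star_def, Complex.conj_ofReal, Complex.coe_smul]

omit [StarOrderedRing A] in
lemma r_inner_smul_right_real {c : ℝ} {x y : E} : ⟪x, (c : ℂ) • y⟫ = c • ⟪x, y⟫ := by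
  rw [OldRightCStarModule.inner_smul_right_complex, Complex.coe_smul]

lemma r_norm_inner_le {x y : E} : ‖⟪x, y⟫‖ ≤ ‖x‖ * ‖y‖ := by
  have hn : ∀ z : E, 0 ≤ ‖z‖ := fun z => by
    rw [OldRightCStarModule.norm_eq_sqrt_norm_inner_self (A := A) z]
    exact Real.sqrt_nonneg _
  rcases eq_or_ne x 0 with h | h
  · subst h
    have : ⟪(0 : E), y⟫ = 0 := by
      have h0 := r_inner_sub_left (A := A) (x := (0 : E)) (y := (0 : E)) (z := y)
      rw [sub_self, sub_self] at h0
      exact h0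
    rw [this, norm_zero]
    exact mul_nonneg (hn _) (hn _)
  set c : ℝ := ‖x‖ ^ 2 with hc
  have hcx : ‖⟪x, x⟫‖ = c := by
    rw [hc, OldRightCStarModule.norm_eq_sqrt_norm_inner_self (A := A) x, Real.sq_sqrt (norm_nonneg _)]
  have hcy : ‖⟪y, y⟫‖ = ‖y‖ ^ 2 := by
    rw [OldRightCStarModule.norm_eq_sqrt_norm_inner_self (A := A) y, Real.sq_sqrt (norm_nonneg _)]
  have hxpos : 0 < ‖x‖ := by
    rw [OldRightCStarModule.norm_eq_sqrt_norm_inner_self (A := A) x]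
    apply Real.sqrt_pos.mpr
    apply norm_pos_iff.mpr
    intro H
    exact h (OldRightCStarModule.inner_self.mp H)
  have hcpos : 0 < c := by positivity
  set a : A := ⟪x, y⟫ with ha
  have hsa : star a = ⟪y, x⟫ := OldRightCStarModule.star_inner x y
  set P : A := ⟪y, x⟫ * a with hP
  have h0 : (0 : A) ≤ ⟪x <• a - (c : ℂ) • y, x <• a - (c : ℂ) • y⟫ :=
    OldRightCStarModule.inner_self_nonneg
  have hexp : ⟪x <• a - (c : ℂ) • y, x <• a - (c : ℂ) • y⟫
      = star a * ⟪x, x⟫ * a - c • P - c • P + c • (c • ⟪y, y⟫) := by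
    rw [r_inner_sub_left, r_inner_sub_right, r_inner_sub_right, r_inner_op_smul_left,
      r_inner_op_smul_left, OldRightCStarModule.inner_op_smul_right,
      OldRightCStarModule.inner_op_smul_right, r_inner_smul_left_real, r_inner_smul_left_real,
      r_inner_smul_right_real, r_inner_smul_right_real, ← ha, hP, ← hsa]
    simp only [mul_smul_comm, smul_mul_assoc, smul_sub, mul_assoc]
    abel
  have hle : star a * ⟪x, x⟫ * a ≤ c • P := by
    rw [← hcx, hP, ← hsa]
    exact CStarAlgebra.star_left_conjugate_le_norm_smul (hb := OldRightCStarModule.star_inner x x)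
  have h1 : (0 : A) ≤ c • (c • ⟪y, y⟫) - c • P := by
    have := h0.trans_eq hexp
    have h2 : star a * ⟪x, x⟫ * a - c • P - c • P + c • (c • ⟪y, y⟫)
        ≤ c • P - c • P - c • P + c • (c • ⟪y, y⟫) := by gcongr
    calc (0 : A) ≤ _ := this.trans h2
      _ = _ := by abel
  have hPle : P ≤ c • ⟪y, y⟫ := by
    rw [← smul_le_smul_iff_of_pos_left hcpos]
    exact sub_nonneg.mp h1
  have hPnn : (0 : A) ≤ P := by
    rw [hP, ← hsa]
    exact star_mul_self_nonneg a
  have key : ‖a‖ ^ 2 ≤ (‖x‖ * ‖y‖) ^ 2 := by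
    calc ‖a‖ ^ 2 = ‖P‖ := by rw [hP, ← hsa, CStarRing.norm_star_mul_self, pow_two]
      _ ≤ ‖c • ⟪y, y⟫‖ := CStarAlgebra.norm_le_norm_of_nonneg_of_le hPnn hPle
      _ = (‖x‖ * ‖y‖) ^ 2 := by
        rw [norm_smul, hcy, Real.norm_of_nonneg hcpos.le, hc, mul_pow]
  exact (pow_le_pow_iff_left₀ (norm_nonneg _) (mul_nonneg (hn x) (hn y)) (by norm_num)).mp key

/-- Noncommutative Heisenberg–Robertson uncertainty principle. -/
theorem noncommutative_heisenberg_robertson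
(T S : E →ₗ[ℂ] E)
    (hTA : ∀ (a : A) (y : E), T (y <• a) = T y <• a)
    (hSA : ∀ (a : A) (y : E), S (y <• a) = S y <• a)
    (hT : ∀ y z : E, ⟪T y, z⟫ = ⟪y, T z⟫) (hS : ∀ y z : E, ⟪S y, z⟫ = ⟪y, S z⟫)
    (hTb : ∃ C : ℝ, ∀ y : E, ‖T y‖ ≤ C * ‖y‖) (hSb : ∃ C : ℝ, ∀ y : E, ‖S y‖ ≤ C * ‖y‖)
    (x : E) (hx : ⟪x, x⟫ = 1) :
    (1 / 2 : ℝ) * ‖⟪T (S x) - S (T x), x⟫ + (⟪T x, x⟫ * ⟪S x, x⟫ - ⟪S x, x⟫ * ⟪T x, x⟫)‖ ≤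
      ‖T x - x <• ⟪T x, x⟫‖ * ‖S x - x <• ⟪S x, x⟫‖ := by
  set a : A := ⟪T x, x⟫ with ha_def
  set b : A := ⟪S x, x⟫ with hb_def
  have hsa : star a = a := by rw [ha_def, OldRightCStarModule.star_inner, ← hT]
  have hsb : star b = b := by rw [hb_def, OldRightCStarModule.star_inner, ← hS]
  set u : E := T x - x <• a with hu
  set v : E := S x - x <• b with hv
  have huv : ⟪u, v⟫ = ⟪T x, S x⟫ - a * b := by
    simp only [hu, hv, r_inner_sub_left, r_inner_sub_right,
      r_inner_op_smul_left, OldRightCStarModule.inner_op_smul_right, hsa, hx]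
    have hxS : ⟪x, S x⟫ = b := by rw [hb_def, ← OldRightCStarModule.star_inner, hsb]
    rw [hxS, mul_one]
    simp [ha_def]
  have hvu : ⟪v, u⟫ = ⟪S x, T x⟫ - b * a := by
    simp only [hu, hv, r_inner_sub_left, r_inner_sub_right,
      r_inner_op_smul_left, OldRightCStarModule.inner_op_smul_right, hsb, hx]
    have hxT : ⟪x, T x⟫ = a := by rw [ha_def, ← OldRightCStarModule.star_inner, hsa]
    rw [hxT, mul_one]
    simp [hb_def]
  have key : ⟪T (S x) - S (T x), x⟫ + (a * b - b * a) = ⟪v, u⟫ - ⟪u, v⟫ := by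
    rw [huv, hvu, r_inner_sub_left, hT (S x) x, hS (T x) x,
      ← OldRightCStarModule.star_inner (T x), ← OldRightCStarModule.star_inner (S x)]
    abel
  rw [key]
  have h1 : ‖⟪v, u⟫ - ⟪u, v⟫‖ ≤ 2 * ‖⟪u, v⟫‖ := by
    calc ‖⟪v, u⟫ - ⟪u, v⟫‖ ≤ ‖⟪v, u⟫‖ + ‖⟪u, v⟫‖ := norm_sub_le _ _
      _ = 2 * ‖⟪u, v⟫‖ := by
          rw [← OldRightCStarModule.star_inner u v, norm_star]; ring
  have h2 : ‖⟪u, v⟫‖ ≤ ‖u‖ * ‖v‖ := r_norm_inner_le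
  linarith
end

section
/- Let E be a Hilbert C*-module over a commutative unital C*-algebra A, and let T, S be bounded adjointable self-adjoint operators on E. For x ∈ E with ⟨x,x⟩ = 1, Δ_x(S)²·d_x(T)² + Δ_x(T)²·d_x(S)² ≥ (1/2)[(⟨{T,S}x,x⟩ − 2⟨Tx,x⟩⟨Sx,x⟩)² − ⟨[T,S]x,x⟩²] as self-adjoint elements of A. -/
open scoped RightActions

class CStarModuleOld (A : outParam <| Type*) (E : Type*) [NonUnitalSemiring A] [StarRing A]
    [Module ℂ A] [AddCommGroup E] [Module ℂ E] [PartialOrder A] [SMul Aᵐᵒᵖ E] [Norm A] [Norm E]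
    extends Inner A E where
  inner_add_right {x} {y} {z} : inner x (y + z) = inner x y + inner x z
  inner_self_nonneg {x} : 0 ≤ inner x x
  inner_self {x} : inner x x = 0 ↔ x = 0
  inner_op_smul_right {a : A} {x y : E} : inner x (y <• a) = inner x y * a
  inner_smul_right_complex {z : ℂ} {x} {y} : inner x (z • y) = z • inner x y
  star_inner x y : star (inner x y) = inner y x
  norm_eq_sqrt_norm_inner_self x : ‖x‖ = Real.sqrt ‖inner x x‖

variable {A E : Type*} [CommCStarAlgebra A] [PartialOrder A] [StarOrderedRing A]
  [AddCommGroup E] [Module ℂ E] [SMul Aᵐᵒᵖ E] [Norm E] [CStarModuleOld A E]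

local notation "⟪" x ", " y "⟫" => (inner A x y : A)

namespace CStarModuleOld

attribute [simp] CStarModuleOld.inner_add_right CStarModuleOld.star_inner
attribute [simp] CStarModuleOld.inner_op_smul_right CStarModuleOld.inner_smul_right_complex

@[simp]
lemma inner_add_left {x y z : E} : ⟪x + y, z⟫ = ⟪x, z⟫ + ⟪y, z⟫ := by
  rw [← star_inner z, CStarModuleOld.inner_add_right, star_add, star_inner, star_inner]

@[simp]
lemma inner_op_smul_left {a : A} {x y : E} : ⟪x <• a, y⟫ = star a * ⟪x, y⟫ := by
  rw [← star_inner y, CStarModuleOld.inner_op_smul_right, star_mul, star_inner]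

@[simp]
lemma inner_neg_left {x y : E} : ⟪-x, y⟫ = -⟪x, y⟫ := by
  have h := (inner_add_left (A := A) (x := x) (y := -x) (z := y)).symm
  rw [add_neg_cancel, ← star_inner y 0] at h
  have h0 : ⟪y, (0 : E)⟫ = 0 := by
    have := CStarModuleOld.inner_add_right (A := A) (x := y) (y := (0 : E)) (z := 0)
    rw [add_zero] at this
    exact left_eq_add.mp this
  rw [h0, star_zero] at h
  exact eq_neg_of_add_eq_zero_right h

@[simp]
lemma inner_sub_left {x y z : E} : ⟪x - y, z⟫ = ⟪x, z⟫ - ⟪y, z⟫ := by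
  rw [sub_eq_add_neg, inner_add_left, inner_neg_left, ← sub_eq_add_neg]

@[simp]
lemma inner_sub_right {x y z : E} : ⟪x, y - z⟫ = ⟪x, y⟫ - ⟪x, z⟫ := by
  rw [← star_inner y, ← star_inner z, ← star_sub, ← inner_sub_left, star_inner]

lemma inner_mul_inner_swap_le {x y : E} : ⟪x, y⟫ * ⟪y, x⟫ ≤ ‖y‖ ^ 2 • ⟪x, x⟫ := by
  letI : SMul A E := ⟨fun a y => y <• a⟩
  letI : CStarModule A E :=
    { toInner := (inferInstance : CStarModuleOld A E).toInner
      inner_add_right := CStarModuleOld.inner_add_right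
      inner_self_nonneg := CStarModuleOld.inner_self_nonneg
      inner_self := CStarModuleOld.inner_self
      inner_op_smul_right := by
        intro a x y
        show ⟪x, y <• a⟫ = _
        rw [CStarModuleOld.inner_op_smul_right, mul_comm]
      inner_smul_right_complex := CStarModuleOld.inner_smul_right_complex
      star_inner := CStarModuleOld.star_inner
      norm_eq_sqrt_norm_inner_self := CStarModuleOld.norm_eq_sqrt_norm_inner_self }
  rw [mul_comm]
  exact CStarModule.inner_mul_inner_swap_le

end CStarModuleOld

/-- HRS uncertainty, modular form, over a commutative C*-algebra. -/
theorem commutative_HRS_modular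
(T S : E →ₗ[ℂ] E)
    (hTA : ∀ (a : A) (y : E), T (y <• a) = T y <• a)
    (hSA : ∀ (a : A) (y : E), S (y <• a) = S y <• a)
    (hT : ∀ y z : E, ⟪T y, z⟫ = ⟪y, T z⟫) (hS : ∀ y z : E, ⟪S y, z⟫ = ⟪y, S z⟫)
    (hTb : ∃ C : ℝ, ∀ y : E, ‖T y‖ ≤ C * ‖y‖) (hSb : ∃ C : ℝ, ∀ y : E, ‖S y‖ ≤ C * ‖y‖)
    (x : E) (hx : ⟪x, x⟫ = 1) :
    (2 : ℝ)⁻¹ •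
      ((⟪T (S x) + S (T x), x⟫ - 2 * (⟪T x, x⟫ * ⟪S x, x⟫)) ^ 2 -
        ⟪T (S x) - S (T x), x⟫ ^ 2) ≤
    (‖S x - x <• ⟪S x, x⟫‖ ^ 2 : ℝ) • (⟪T x, T x⟫ - ⟪T x, x⟫ ^ 2) +
      (‖T x - x <• ⟪T x, x⟫‖ ^ 2 : ℝ) • (⟪S x, S x⟫ - ⟪S x, x⟫ ^ 2) := by
  open CStarModuleOld in
  set t := ⟪T x, x⟫ with ht
  set s := ⟪S x, x⟫ with hs
  have hxt : ⟪x, T x⟫ = t := (hT x x).symm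
  have hxs : ⟪x, S x⟫ = s := (hS x x).symm
  have hts : star t = t := by rw [ht, star_inner, hxt]
  have hss : star s = s := by rw [hs, star_inner, hxs]
  set u := T x - x <• t with hu
  set v := S x - x <• s with hv
  have huu : ⟪u, u⟫ = ⟪T x, T x⟫ - t ^ 2 := by
    simp [hu, inner_op_smul_left, inner_op_smul_right, hx, hts, hxt, ← ht]
    ring
  have hvv : ⟪v, v⟫ = ⟪S x, S x⟫ - s ^ 2 := by
    simp [hv, inner_op_smul_left, inner_op_smul_right, hx, hss, hxs, ← hs]
    ring
  have huv : ⟪u, v⟫ = ⟪T x, S x⟫ - t * s := by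
    simp [hu, hv, inner_op_smul_left, inner_op_smul_right, hx, hts, hxs, ← hs, ← ht]
  have hvu : ⟪v, u⟫ = ⟪S x, T x⟫ - s * t := by
    simp [hu, hv, inner_op_smul_left, inner_op_smul_right, hx, hss, hxt, ← hs, ← ht]
  have h1 : ⟪T (S x), x⟫ = ⟪S x, T x⟫ := hT (S x) x
  have h2 : ⟪S (T x), x⟫ = ⟪T x, S x⟫ := hS (T x) x
  have key : ((⟪T (S x) + S (T x), x⟫ - 2 * (t * s)) ^ 2 -
      ⟪T (S x) - S (T x), x⟫ ^ 2)
      = (2 : ℝ) • (⟪u, v⟫ * ⟪v, u⟫ + ⟪v, u⟫ * ⟪u, v⟫) := by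
    rw [two_smul, huv, hvu, CStarModuleOld.inner_add_left, CStarModuleOld.inner_sub_left, h1, h2]
    ring
  rw [key, inv_smul_smul₀ (by norm_num : (2:ℝ) ≠ 0), ← huu, ← hvv]
  exact add_le_add inner_mul_inner_swap_le inner_mul_inner_swap_le
end

section
/- Let E be a Hilbert C*-module over a commutative unital C*-algebra A, and let T, S be bounded adjointable self-adjoint operators on E. For x ∈ E with ⟨x,x⟩ = 1, Δ_x(T)·Δ_x(S) ≥ (1/2)‖⟨[T,S]x,x⟩‖. -/
open scoped RightActions

variable {A E : Type*} [CommCStarAlgebra A] [PartialOrder A] [StarOrderedRing A]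
  [AddCommGroup E] [Module ℂ E] [SMul A E] [Norm E] [CStarModule A E]

local notation "⟪" x ", " y "⟫" => (inner A x y : A)

/-- Heisenberg–Robertson uncertainty over a commutative C*-algebra. -/
theorem commutative_heisenberg_robertson
(T S : E →ₗ[ℂ] E)
    (hTA : ∀ (a : A) (y : E), T (a • y) = a • T y)
    (hSA : ∀ (a : A) (y : E), S (a • y) = a • S y)
    (hT : ∀ y z : E, ⟪T y, z⟫ = ⟪y, T z⟫) (hS : ∀ y z : E, ⟪S y, z⟫ = ⟪y, S z⟫)
    (hTb : ∃ C : ℝ, ∀ y : E, ‖T y‖ ≤ C * ‖y‖) (hSb : ∃ C : ℝ, ∀ y : E, ‖S y‖ ≤ C * ‖y‖)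
    (x : E) (hx : ⟪x, x⟫ = 1) :
    (1 / 2 : ℝ) * ‖⟪T (S x) - S (T x), x⟫‖ ≤
      ‖T x - ⟪T x, x⟫ • x‖ * ‖S x - ⟪S x, x⟫ • x‖ := by
  set a : A := ⟪T x, x⟫ with ha_def
  set b : A := ⟪S x, x⟫ with hb_def
  set u : E := T x - a • x with hu_def
  set v : E := S x - b • x with hv_def
  have ha : star a = a := by rw [ha_def, CStarModule.star_inner, hT]
  have hb : star b = b := by rw [hb_def, CStarModule.star_inner, hS]
  have huv : ⟪u, v⟫ = ⟪T x, S x⟫ - a * b := by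
    simp only [hu_def, hv_def, CStarModule.inner_sub_left, CStarModule.inner_sub_right,
      CStarModule.inner_op_smul_left, CStarModule.inner_op_smul_right, hx, ha, hb]
    have h1 : ⟪T x, x⟫ = a := rfl
    have h2 : ⟪x, S x⟫ = b := by rw [← CStarModule.star_inner, ← hb_def, hb]
    rw [h1, h2, one_mul]
    ring
  have hvu : ⟪v, u⟫ = ⟪S x, T x⟫ - b * a := by
    simp only [hu_def, hv_def, CStarModule.inner_sub_left, CStarModule.inner_sub_right,
      CStarModule.inner_op_smul_left, CStarModule.inner_op_smul_right, hx, ha, hb]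
    have h1 : ⟪S x, x⟫ = b := rfl
    have h2 : ⟪x, T x⟫ = a := by rw [← CStarModule.star_inner, ← ha_def, ha]
    rw [h1, h2, one_mul]
    ring
  have key : ⟪T (S x) - S (T x), x⟫ = ⟪v, u⟫ - ⟪u, v⟫ := by
    rw [huv, hvu, CStarModule.inner_sub_left, hT (S x) x, hS (T x) x, mul_comm b a]
    abel
  rw [key]
  have h1 : ‖(⟪v, u⟫ : A) - ⟪u, v⟫‖ ≤ ‖(⟪v, u⟫ : A)‖ + ‖(⟪u, v⟫ : A)‖ := norm_sub_le _ _
  have h2 : ‖⟪v, u⟫‖ ≤ ‖v‖ * ‖u‖ := CStarModule.norm_inner_le E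
  have h3 : ‖⟪u, v⟫‖ ≤ ‖u‖ * ‖v‖ := CStarModule.norm_inner_le E
  nlinarith [CStarModule.norm_nonneg (A := A) (x := u), CStarModule.norm_nonneg (A := A) (x := v)]
end
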